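/- Let K : Ω × Ω → ℝ be a symmetric positive semidefinite kernel on a compact Ω ⊂ ℝᵈ satisfying |K(x,x) − K(x,y)| ≤ L‖x−y‖, and let z₁,…,zₙ be pivots chosen by complete pivoting (zₖ maximizes R_{k−1}(x,x) over x ∈ Ω). Then ‖Rₙ‖_∞ ≤ 4L · min_{1≤i<j≤n} ‖zᵢ − zⱼ‖, where ‖Rₙ‖_∞ = sup_{x,y} |Rₙ(x,y)|. -/

import Mathlib

/-- A kernel `K` on a set `Ω` is symmetric positive semidefinite if it is symmetric on `Ω`
and every finite kernel matrix formed from points of `Ω` is positive semidefinite. -/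
def IsPSDKernel {E : Type*} (Ω : Set E) (K : E → E → ℝ) : Prop :=
  (∀ x ∈ Ω, ∀ y ∈ Ω, K x y = K y x) ∧
  ∀ (n : ℕ) (p : Fin n → E), (∀ i, p i ∈ Ω) →
    ∀ c : Fin n → ℝ, 0 ≤ ∑ i, ∑ j, c i * c j * K (p i) (p j)

/-- One pivoted Cholesky step at pivot `z`. -/
noncomputable def cholStep {E : Type*} (R : E → E → ℝ) (z : E) : E → E → ℝ :=
  fun x y => R x y - R x z * R z y / R z z

/-- The residual of the pivoted Cholesky algorithm after successively pivoting at the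
points of the list `zs` (in order). -/
noncomputable def cholResid {E : Type*} (K : E → E → ℝ) (zs : List E) : E → E → ℝ :=
  zs.foldl cholStep K

section helpers
variable {E : Type*} {S : Set E} {R : E → E → ℝ} {zz : E}

def SymOn (S : Set E) (R : E → E → ℝ) : Prop := ∀ x ∈ S, ∀ y ∈ S, R x y = R y x
def PSDOn (S : Set E) (R : E → E → ℝ) : Prop :=
  ∀ (m : ℕ) (p : Fin m → E), (∀ i, p i ∈ S) →
    ∀ c : Fin m → ℝ, 0 ≤ ∑ i, ∑ j, c i * c j * R (p i) (p j)

lemma cholStep_symOn (hs : SymOn S R) (hz : zz ∈ S) : SymOn S (cholStep R zz) := by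
  intro x hx y hy
  simp only [cholStep]
  rw [hs x hx y hy, hs x hx zz hz, hs y hy zz hz]
  ring

lemma cholStep_psdOn (hs : SymOn S R) (hpsd : PSDOn S R) (hz : zz ∈ S)
    (hzz : 0 < R zz zz) : PSDOn S (cholStep R zz) := by
  intro m p hp c
  set s : ℝ := ∑ i, c i * R (p i) zz with hsdef
  have hzz' : R zz zz ≠ 0 := ne_of_gt hzz
  have key := hpsd (m + 1) (Fin.snoc p zz)
    (by
      intro i
      refine Fin.lastCases ?_ ?_ i
      · simpa using hz
      · intro i; simpa using hp i)
    (Fin.snoc c (-(s / R zz zz)))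
  have hsum2 : ∀ j, ∑ i : Fin m, c i * R (p i) (p j) * c j
      = (∑ i : Fin m, c i * c j * R (p i) (p j)) := by
    intro j; refine Finset.sum_congr rfl fun i _ => by ring
  have expand : (∑ i : Fin (m+1), ∑ j : Fin (m+1),
      (Fin.snoc c (-(s / R zz zz)) : Fin (m+1) → ℝ) i *
      (Fin.snoc c (-(s / R zz zz)) : Fin (m+1) → ℝ) j *
      R ((Fin.snoc p zz : Fin (m+1) → E) i) ((Fin.snoc p zz : Fin (m+1) → E) j))
      = (∑ i, ∑ j, c i * c j * R (p i) (p j)) - s * s / R zz zz := by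
    rw [Fin.sum_univ_castSucc]
    simp only [Fin.snoc_castSucc, Fin.snoc_last]
    have inner : ∀ i : Fin m, (∑ j : Fin (m+1),
        c i * (Fin.snoc c (-(s / R zz zz)) : Fin (m+1) → ℝ) j *
        R (p i) ((Fin.snoc p zz : Fin (m+1) → E) j))
        = (∑ j : Fin m, c i * c j * R (p i) (p j)) + c i * (-(s / R zz zz)) * R (p i) zz := by
      intro i
      rw [Fin.sum_univ_castSucc]
      simp only [Fin.snoc_castSucc, Fin.snoc_last]
    rw [Finset.sum_congr rfl fun i _ => inner i]
    rw [Fin.sum_univ_castSucc]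
    simp only [Fin.snoc_castSucc, Fin.snoc_last]
    rw [Finset.sum_add_distrib]
    have h1 : (∑ i : Fin m, c i * (-(s / R zz zz)) * R (p i) zz) = -(s * s / R zz zz) := by
      have : (∑ i : Fin m, c i * (-(s / R zz zz)) * R (p i) zz)
          = (-(s / R zz zz)) * ∑ i : Fin m, c i * R (p i) zz := by
        rw [Finset.mul_sum]; exact Finset.sum_congr rfl fun i _ => by ring
      rw [this, ← hsdef]; ring
    have h2 : (∑ j : Fin m, -(s / R zz zz) * c j * R zz (p j)) = -(s * s / R zz zz) := by
      have heq : ∀ j : Fin m, -(s / R zz zz) * c j * R zz (p j)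
          = (-(s / R zz zz)) * (c j * R (p j) zz) := by
        intro j; rw [hs zz hz (p j) (hp j)]; ring
      rw [Finset.sum_congr rfl fun j _ => heq j, ← Finset.mul_sum, ← hsdef]; ring
    rw [h1, h2]
    field_simp
    ring
  rw [expand] at key
  have target : (∑ i, ∑ j, c i * c j * cholStep R zz (p i) (p j))
      = (∑ i, ∑ j, c i * c j * R (p i) (p j)) - s * s / R zz zz := by
    simp only [cholStep]
    have h3 : ∀ i j, c i * c j * (R (p i) (p j) - R (p i) zz * R zz (p j) / R zz zz)
        = c i * c j * R (p i) (p j)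
          - (c i * R (p i) zz) * (c j * R (p j) zz) / R zz zz := by
      intro i j; rw [hs zz hz (p j) (hp j)]; ring
    simp only [h3]
    rw [Finset.sum_congr rfl fun i _ => Finset.sum_sub_distrib _ _, Finset.sum_sub_distrib]
    congr 1
    have : (∑ i, ∑ j, (c i * R (p i) zz) * (c j * R (p j) zz) / R zz zz)
        = (∑ i, ∑ j, (c i * R (p i) zz) * (c j * R (p j) zz)) / R zz zz := by
      rw [Finset.sum_div]
      exact Finset.sum_congr rfl fun i _ => by rw [Finset.sum_div]
    rw [this, ← Finset.sum_mul_sum, ← hsdef]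
  rw [target]
  exact key

end helpers
section helpers2
variable {E : Type*} {S : Set E} {R : E → E → ℝ} {zz : E}


lemma cholStep_diag_le (hs : SymOn S R) (hz : zz ∈ S) (hzz : 0 < R zz zz) :
    ∀ x ∈ S, cholStep R zz x x ≤ R x x := by
  intro x hx
  have h1 : cholStep R zz x x = R x x - R x zz ^ 2 / R zz zz := by
    simp only [cholStep]; rw [hs zz hz x hx]; ring
  rw [h1]
  have h2 : 0 ≤ R x zz ^ 2 / R zz zz := div_nonneg (sq_nonneg _) hzz.le
  linarith

lemma cholStep_energy_le (hs : SymOn S R) (hz : zz ∈ S) (hzz : 0 < R zz zz) :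
    ∀ x ∈ S, ∀ y ∈ S,
    cholStep R zz x x - 2 * cholStep R zz x y + cholStep R zz y y
      ≤ R x x - 2 * R x y + R y y := by
  intro x hx y hy
  have key : cholStep R zz x x - 2 * cholStep R zz x y + cholStep R zz y y
      = (R x x - 2 * R x y + R y y) - (R x zz - R y zz) ^ 2 / R zz zz := by
    simp only [cholStep]
    rw [hs zz hz x hx, hs zz hz y hy]
    field_simp
    ring
  rw [key]
  have := div_nonneg (sq_nonneg (R x zz - R y zz)) hzz.le
  linarith

lemma cholStep_pivot_row (hzz : R zz zz ≠ 0) : ∀ w, cholStep R zz zz w = 0 := by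
  intro w
  simp only [cholStep]
  rw [mul_comm, mul_div_assoc, div_self hzz, mul_one, sub_self]

lemma cholStep_zero_row {x0 : E} (h : ∀ w, R x0 w = 0) : ∀ w, cholStep R zz x0 w = 0 := by
  intro w; simp [cholStep, h]

end helpers2

theorem complete_pivoting_residual_le_min_pivot_distance {d n : ℕ}
    (Ω : Set (EuclideanSpace ℝ (Fin d))) (hΩ : IsCompact Ω)
    (K : EuclideanSpace ℝ (Fin d) → EuclideanSpace ℝ (Fin d) → ℝ)
    (hK : IsPSDKernel Ω K) (L : ℝ) (hL : 0 < L)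
    (hLip : ∀ x ∈ Ω, ∀ y ∈ Ω, |K x x - K x y| ≤ L * ‖x - y‖)
    (z : Fin n → EuclideanSpace ℝ (Fin d)) (hzΩ : ∀ i, z i ∈ Ω)
    -- well-definedness: each selected pivot has a positive diagonal residual
    (hwd : ∀ k : Fin n,
      0 < cholResid K ((List.ofFn z).take k) (z k) (z k))
    -- complete pivoting: `z k` maximizes the diagonal of the current residual over `Ω`
    (hcp : ∀ k : Fin n, ∀ x ∈ Ω,
      cholResid K ((List.ofFn z).take k) x x ≤
        cholResid K ((List.ofFn z).take k) (z k) (z k)) :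
    ∀ x ∈ Ω, ∀ y ∈ Ω, ∀ i j : Fin n, i ≠ j →
      |cholResid K (List.ofFn z) x y| ≤ 4 * L * ‖z i - z j‖ := by
  intro x hx y hy
  suffices H : ∀ i j : Fin n, i < j → |cholResid K (List.ofFn z) x y| ≤ 4 * L * ‖z i - z j‖ by
    intro i j hij
    rcases hij.lt_or_gt with h | h
    · exact H i j h
    · have := H j i h
      rwa [norm_sub_rev] at this
  intro i j hij
  set Rk : ℕ → EuclideanSpace ℝ (Fin d) → EuclideanSpace ℝ (Fin d) → ℝ :=
    fun k => cholResid K ((List.ofFn z).take k) with hRkdef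
  have hsucc : ∀ (k : ℕ) (hk : k < n), Rk (k + 1) = cholStep (Rk k) (z ⟨k, hk⟩) := by
    intro k hk
    have h1 : (List.ofFn z).take (k + 1) = (List.ofFn z).take k ++ [z ⟨k, hk⟩] := by
      rw [List.take_succ]
      congr 1
      simp [List.getElem?_ofFn, hk]
    simp only [hRkdef, h1, cholResid, List.foldl_append, List.foldl_cons, List.foldl_nil]
  have hR0 : Rk 0 = K := rfl
  have hwd' : ∀ (k : ℕ) (hk : k < n), 0 < Rk k (z ⟨k, hk⟩) (z ⟨k, hk⟩) := fun k hk => hwd ⟨k, hk⟩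
  have hinv : ∀ k, k ≤ n → SymOn Ω (Rk k) ∧ PSDOn Ω (Rk k) := by
    intro k
    induction k with
    | zero => intro _; exact ⟨hK.1, fun m p hp c => hK.2 m p hp c⟩
    | succ k ih =>
      intro hk1
      have hk : k < n := hk1
      obtain ⟨hsym, hpsd⟩ := ih hk.le
      rw [hsucc k hk]
      exact ⟨cholStep_symOn hsym (hzΩ ⟨k, hk⟩),
        cholStep_psdOn hsym hpsd (hzΩ ⟨k, hk⟩) (hwd' k hk)⟩
  have hmono1 : ∀ (k : ℕ) (hk : k < n), ∀ w ∈ Ω, Rk (k + 1) w w ≤ Rk k w w := by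
    intro k hk w hw
    rw [hsucc k hk]
    exact cholStep_diag_le (hinv k hk.le).1 (hzΩ ⟨k, hk⟩) (hwd' k hk) w hw
  have hdiag : ∀ w ∈ Ω, ∀ a b : ℕ, a ≤ b → b ≤ n → Rk b w w ≤ Rk a w w := by
    intro w hw a b hab hbn
    induction b, hab using Nat.le_induction with
    | base => exact le_rfl
    | succ b hab ih =>
      have hb : b < n := hbn
      exact le_trans (hmono1 b hb w hw) (ih hb.le)
  have henergy : ∀ u ∈ Ω, ∀ v ∈ Ω, ∀ k : ℕ, k ≤ n →
      Rk k u u - 2 * Rk k u v + Rk k v v ≤ K u u - 2 * K u v + K v v := by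
    intro u hu v hv k
    induction k with
    | zero => intro _; rw [hR0]
    | succ k ih =>
      intro hk1
      have hk : k < n := hk1
      refine le_trans ?_ (ih hk.le)
      rw [hsucc k hk]
      exact cholStep_energy_le (hinv k hk.le).1 (hzΩ ⟨k, hk⟩) (hwd' k hk) u hu v hv
  have hzero : ∀ (a : Fin n) (k : ℕ), (a : ℕ) < k → k ≤ n → ∀ w, Rk k (z a) w = 0 := by
    intro a k hak
    induction k, hak using Nat.le_induction with
    | base =>
      intro hkn w
      have ha : (a : ℕ) < n := a.isLt
      rw [hsucc a ha]
      have : (⟨(a : ℕ), ha⟩ : Fin n) = a := Fin.eta a ha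
      rw [this]
      exact cholStep_pivot_row (ne_of_gt (hwd a)) w
    | succ k hak ih =>
      intro hkn w
      have hk : k < n := hkn
      rw [hsucc k hk]
      exact cholStep_zero_row (fun w => ih hk.le w) w
  -- main chain
  have hjn : (j : ℕ) ≤ n := j.isLt.le
  have hsymj := (hinv j hjn).1
  have hzi := hzΩ i
  have hzj := hzΩ j
  have h0 : Rk j (z i) (z i) = 0 := hzero i j hij hjn (z i)
  have h0' : Rk j (z j) (z i) = 0 := by
    rw [hsymj (z j) hzj (z i) hzi]
    exact hzero i j hij hjn (z j)
  set a : ℝ := Rk j (z j) (z j) with hadef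
  have ha1 : a ≤ K (z j) (z j) - 2 * K (z j) (z i) + K (z i) (z i) := by
    have := henergy (z j) hzj (z i) hzi j hjn
    rw [h0, h0'] at this
    linarith
  have ha2 : a ≤ 2 * L * ‖z j - z i‖ := by
    have l1 : K (z j) (z j) - K (z j) (z i) ≤ L * ‖z j - z i‖ :=
      le_trans (le_abs_self _) (hLip (z j) hzj (z i) hzi)
    have l2 : K (z i) (z i) - K (z i) (z j) ≤ L * ‖z i - z j‖ :=
      le_trans (le_abs_self _) (hLip (z i) hzi (z j) hzj)
    rw [norm_sub_rev] at l2
    have l3 : K (z i) (z j) = K (z j) (z i) := hK.1 (z i) hzi (z j) hzj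
    linarith
  -- Cauchy-Schwarz-type bound for R n
  have hRn : cholResid K (List.ofFn z) = Rk n := by
    show cholResid K (List.ofFn z) = cholResid K (List.take n (List.ofFn z))
    rw [List.take_of_length_le (by simp)]
  have hsymn := (hinv n le_rfl).1
  have hpsdn := (hinv n le_rfl).2
  have hyx : Rk n y x = Rk n x y := hsymn y hy x hx
  have hp2 : ∀ c : Fin 2 → ℝ, 0 ≤ ∑ s, ∑ t, c s * c t * Rk n (![x, y] s) (![x, y] t) := by
    intro c
    exact hpsdn 2 ![x, y] (by intro s; fin_cases s <;> simpa) c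
  have e1 : (0:ℝ) ≤ Rk n x x + Rk n x y + (Rk n y x + Rk n y y) := by
    have := hp2 ![1, 1]
    simpa [Fin.sum_univ_two] using this
  have e2 : (0:ℝ) ≤ Rk n x x - Rk n x y - Rk n y x + Rk n y y := by
    have := hp2 ![1, -1]
    simp [Fin.sum_univ_two] at this
    linarith
  have habs : |Rk n x y| ≤ (Rk n x x + Rk n y y) / 2 := by
    rw [abs_le]
    rw [hyx] at e1 e2
    constructor <;> linarith
  have hdx : Rk n x x ≤ a := le_trans (hdiag x hx j n hjn le_rfl) (hcp j x hx)
  have hdy : Rk n y y ≤ a := le_trans (hdiag y hy j n hjn le_rfl) (hcp j y hy)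
  rw [hRn]
  have hnn : (0:ℝ) ≤ ‖z i - z j‖ := norm_nonneg _
  have : ‖z j - z i‖ = ‖z i - z j‖ := norm_sub_rev _ _
  rw [this] at ha2
  calc |Rk n x y| ≤ (Rk n x x + Rk n y y) / 2 := habs
    _ ≤ a := by linarith
    _ ≤ 2 * L * ‖z i - z j‖ := ha2
    _ ≤ 4 * L * ‖z i - z j‖ := by nlinarith
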